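/- Let R be a ring. The following are equivalent: (1) every R-module of finite length is an epimorphic image of an injective R-module (R satisfies property (Q)); (2) every R-module of finite length is R-subinjective; (3) for every projective R-module P and every R-module A of finite length, A is P-subinjective. -/

import Mathlib

universe u

/-- `IsSubinjective R B A` means: the `R`-module `B` is `A`-subinjective, i.e. for every
`R`-module `C`, every injective `R`-linear map `i : A → C` and every `R`-linear map
`f : A → B`, there is an `R`-linear map `g : C → B` with `g ∘ i = f`. -/
def IsSubinjective (R : Type u) [Ring R] (B : Type u) [AddCommGroup B] [Module R B]
    (A : Type u) [AddCommGroup A] [Module R A] : Prop :=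
  ∀ (C : Type u) [AddCommGroup C] [Module R C] (i : A →ₗ[R] C),
    Function.Injective i → ∀ f : A →ₗ[R] B, ∃ g : C →ₗ[R] B, g ∘ₗ i = f

/-- `IsSubprojective R B A` means: the `R`-module `B` is `A`-subprojective, i.e. for every
`R`-module `C`, every surjective `R`-linear map `g : C → A` and every `R`-linear map
`f : B → A`, there is an `R`-linear map `h : B → C` with `g ∘ h = f`. -/
def IsSubprojective (R : Type u) [Ring R] (B : Type u) [AddCommGroup B] [Module R B]
    (A : Type u) [AddCommGroup A] [Module R A] : Prop :=
  ∀ (C : Type u) [AddCommGroup C] [Module R C] (g : C →ₗ[R] A),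
    Function.Surjective g → ∀ f : B →ₗ[R] A, ∃ h : B →ₗ[R] C, g ∘ₗ h = f

/-- `M` is subinjective extension-reflecting (si.e.r.): for every short exact sequence
`0 → A → B → C → 0`, if `A` and `C` are `M`-subinjective, then so is `B`. -/
def IsSIER (R : Type u) [Ring R] (M : Type u) [AddCommGroup M] [Module R M] : Prop :=
  ∀ (A B C : Type u) [AddCommGroup A] [Module R A] [AddCommGroup B] [Module R B]
    [AddCommGroup C] [Module R C] (f : A →ₗ[R] B) (g : B →ₗ[R] C),
    Function.Injective f → Function.Surjective g → Function.Exact f g →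
    IsSubinjective R A M → IsSubinjective R C M → IsSubinjective R B M

/-- `M` is subprojective extension-reflecting (sp.e.r.): for every short exact sequence
`0 → A → B → C → 0`, if `A` and `C` are `M`-subprojective, then so is `B`. -/
def IsSPER (R : Type u) [Ring R] (M : Type u) [AddCommGroup M] [Module R M] : Prop :=
  ∀ (A B C : Type u) [AddCommGroup A] [Module R A] [AddCommGroup B] [Module R B]
    [AddCommGroup C] [Module R C] (f : A →ₗ[R] B) (g : B →ₗ[R] C),
    Function.Injective f → Function.Surjective g → Function.Exact f g →
    IsSubprojective R A M → IsSubprojective R C M → IsSubprojective R B M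



open CategoryTheory

/-- (1) → (3): if every finite-length module is a quotient of an injective module, then
every finite-length module is `P`-subinjective for every projective `P`. -/
lemma aux_Q_to_subinj (R : Type u) [Ring R]
    (h1 : ∀ (A : Type u) [AddCommGroup A] [Module R A], IsFiniteLength R A →
      ∃ E : ModuleCat.{u} R, Module.Injective R E ∧ ∃ f : E →ₗ[R] A, Function.Surjective f) :
    ∀ (P : Type u) [AddCommGroup P] [Module R P], Module.Projective R P →
      ∀ (A : Type u) [AddCommGroup A] [Module R A], IsFiniteLength R A →
        IsSubinjective R A P := by
  intro P _ _ hP A _ _ hA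
  obtain ⟨E, hE, π, hπ⟩ := h1 A hA
  intro C _ _ i hi f
  obtain ⟨f', hf'⟩ := Module.projective_lifting_property π f hπ
  obtain ⟨h, hh⟩ := hE.out i hi f'
  refine ⟨π ∘ₗ h, ?_⟩
  ext x
  simp only [LinearMap.comp_apply, hh x, ← hf', LinearMap.comp_apply]

/-- (2) → (1). -/
lemma aux_subinj_to_Q (R : Type u) [Ring R]
    (h2 : ∀ (A : Type u) [AddCommGroup A] [Module R A], IsFiniteLength R A →
      IsSubinjective R A R) :
    ∀ (A : Type u) [AddCommGroup A] [Module R A], IsFiniteLength R A →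
      ∃ E : ModuleCat.{u} R, Module.Injective R E ∧ ∃ f : E →ₗ[R] A, Function.Surjective f := by
  intro A _ _ hA
  have : IsNoetherian R A := (isFiniteLength_iff_isNoetherian_isArtinian.mp hA).1
  have : Module.Finite R A := ⟨IsNoetherian.noetherian ⊤⟩
  obtain ⟨n, p, hp⟩ := Module.Finite.exists_fin' R A
  -- embed `R` in an injective module `J`
  let J := Injective.under (ModuleCat.of R R)
  let ι : ModuleCat.of R R ⟶ J := Injective.ι _
  have hmono : Function.Injective ι := (ModuleCat.mono_iff_injective ι).mp inferInstance
  have hJc : CategoryTheory.Injective (ModuleCat.of R ↑J) := Injective.injective_under _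
  have hJ : Module.Injective R ↑J := Module.injective_module_of_injective_object R ↑J
  -- `J ^ n` is injective
  have hPi : Module.Injective R (Fin n → ↑J) := by
    constructor
    intro X Y _ _ _ _ g hg φ
    choose h hh using fun k => hJ.out g hg ((LinearMap.proj k) ∘ₗ φ)
    exact ⟨LinearMap.pi h, fun x => funext fun k => hh k x⟩
  -- extend each coordinate map `R → A` along `ι`
  have hsub := h2 A hA
  have key : ∀ k : Fin n, ∃ q : (↥J : Type u) →ₗ[R] A,
      q ∘ₗ ι.hom = p ∘ₗ LinearMap.single R (fun _ : Fin n => R) k :=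
    fun k => hsub ↑J ι.hom hmono _
  choose q hq using key
  refine ⟨ModuleCat.of R (Fin n → ↑J), hPi, ∑ k, q k ∘ₗ LinearMap.proj k, ?_⟩
  intro a
  obtain ⟨x, rfl⟩ := hp a
  refine ⟨fun k => ι (x k), ?_⟩
  have : ∀ k, q k (ι (x k)) = p (Pi.single k (x k)) := by
    intro k
    have := congrArg (fun (m : R →ₗ[R] A) => m (x k)) (hq k)
    exact this
  calc (∑ k, q k ∘ₗ LinearMap.proj k) (fun k => ι (x k))
      = ∑ k, q k (ι (x k)) := by simp [LinearMap.sum_apply]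
    _ = ∑ k, p (Pi.single k (x k)) := by simp [this]
    _ = p (∑ k, Pi.single k (x k)) := by rw [map_sum]
    _ = p x := by rw [Finset.univ_sum_single]

/-- The following are equivalent for a ring `R`:
(1) every `R`-module of finite length is an epimorphic image of an injective module
    (property (Q));
(2) every `R`-module of finite length is `R`-subinjective;
(3) every `R`-module of finite length is `P`-subinjective for every projective module `P`. -/
theorem propertyQ_iff_subinjective (R : Type u) [Ring R] :
    ((∀ (A : Type u) [AddCommGroup A] [Module R A], IsFiniteLength R A →
        ∃ E : ModuleCat.{u} R, Module.Injective R E ∧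
          ∃ f : E →ₗ[R] A, Function.Surjective f) ↔
      (∀ (A : Type u) [AddCommGroup A] [Module R A], IsFiniteLength R A →
        IsSubinjective R A R)) ∧
    ((∀ (A : Type u) [AddCommGroup A] [Module R A], IsFiniteLength R A →
        ∃ E : ModuleCat.{u} R, Module.Injective R E ∧
          ∃ f : E →ₗ[R] A, Function.Surjective f) ↔
      (∀ (P : Type u) [AddCommGroup P] [Module R P], Module.Projective R P →
        ∀ (A : Type u) [AddCommGroup A] [Module R A], IsFiniteLength R A →
          IsSubinjective R A P)) := by
  constructor
  · exact ⟨fun h1 A _ _ hA => aux_Q_to_subinj R h1 R inferInstance A hA, aux_subinj_to_Q R⟩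
  · exact ⟨aux_Q_to_subinj R,
      fun h3 => aux_subinj_to_Q R (fun A _ _ hA => h3 R inferInstance A hA)⟩
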